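/- Let A ⊆ EuclideanSpace ℝ (Fin n) be an open bounded set whose frontier Γ = frontier A is nonempty, and define the signed distance function u by u(x) = infDist(x, Γ) if x ∉ A and u(x) = −infDist(x, Γ) if x ∈ A. Let x ∉ Γ be a point at which u is differentiable, and write ∇u(x) for the gradient of u at x. Then the point x_Γ := x − u(x) • ∇u(x) belongs to Γ, and it is a closest point of Γ to x, i.e., dist(x, x_Γ) = infDist(x, Γ). -/

import Mathlib

open Metric InnerProductSpace

private lemma gradient_neg_aux {n : ℕ} (f : EuclideanSpace ℝ (Fin n) → ℝ)
    (x : EuclideanSpace ℝ (Fin n)) :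
    gradient (fun z => -f z) x = -gradient f x := by
  unfold gradient
  rw [fderiv_fun_neg, map_neg]

private lemma closest_point_aux {n : ℕ} (S : Set (EuclideanSpace ℝ (Fin n)))
    (hSc : IsCompact S) (hne : S.Nonempty)
    (x : EuclideanSpace ℝ (Fin n)) (hx : x ∉ S)
    (hd : DifferentiableAt ℝ (fun z => Metric.infDist z S) x) :
    x - Metric.infDist x S • gradient (fun z => Metric.infDist z S) x ∈ S ∧
    dist x (x - Metric.infDist x S • gradient (fun z => Metric.infDist z S) x)
      = Metric.infDist x S := by
  set f : EuclideanSpace ℝ (Fin n) → ℝ := fun z => Metric.infDist z S with hf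
  set g := gradient f x with hg
  obtain ⟨y, hyS, hyd⟩ := hSc.exists_infDist_eq_dist hne x
  have hpos : 0 < f x := (hSc.isClosed.notMem_iff_infDist_pos hne).1 hx
  have hgrad : HasGradientAt f g x := hd.hasGradientAt
  have hF : HasFDerivAt f (toDual ℝ _ g) x := hgrad.hasFDerivAt
  set v : EuclideanSpace ℝ (Fin n) := y - x with hv
  have hnv : ‖v‖ = f x := by
    rw [hv, ← dist_eq_norm, dist_comm, ← hyd]
  -- the curve γ t = x + t • v
  have hγ : HasDerivAt (fun t : ℝ => x + t • v) v 0 := by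
    simpa using ((hasDerivAt_id (0 : ℝ)).smul_const v).const_add x
  have hcomp : HasDerivAt (fun t : ℝ => f (x + t • v)) (⟪g, v⟫_ℝ) 0 := by
    have hF0 : HasFDerivAt f (toDual ℝ _ g) (x + (0:ℝ) • v) := by simpa using hF
    have := hF0.comp_hasDerivAt 0 hγ
    simp only [toDual_apply_apply] at this; exact this
  -- on [0,1], f (x + t • v) = (1 - t) * f x
  have hline : ∀ t ∈ Set.Icc (0:ℝ) 1, f (x + t • v) = (1 - t) * f x := by
    intro t ht
    have hdist₁ : dist (x + t • v) y = (1 - t) * f x := by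
      have : x + t • v - y = -((1 - t) • v) := by
        rw [hv]; rw [sub_smul, one_smul, smul_sub]; abel
      rw [dist_eq_norm, this, norm_neg, norm_smul, Real.norm_eq_abs,
        abs_of_nonneg (by linarith [ht.2]), hnv]
    have h₁ : f (x + t • v) ≤ (1 - t) * f x := by
      rw [← hdist₁]; exact infDist_le_dist_of_mem hyS
    have h₂ : (1 - t) * f x ≤ f (x + t • v) := by
      have htri : f x ≤ f (x + t • v) + dist x (x + t • v) :=
        infDist_le_infDist_add_dist
      have hdx : dist x (x + t • v) = t * f x := by
        rw [dist_eq_norm]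
        have : x - (x + t • v) = -(t • v) := by abel
        rw [this, norm_neg, norm_smul, Real.norm_eq_abs, abs_of_nonneg ht.1, hnv]
      rw [hdx] at htri; linarith
    linarith
  -- derivative from the right: ⟪g, v⟫ = -f x
  have hud : UniqueDiffWithinAt ℝ (Set.Icc (0:ℝ) 1) 0 :=
    (uniqueDiffOn_Icc zero_lt_one) 0 (Set.mem_Icc.2 ⟨le_refl 0, zero_le_one⟩)
  have hw1 : HasDerivWithinAt (fun t : ℝ => f (x + t • v)) (⟪g, v⟫_ℝ) (Set.Icc 0 1) 0 :=
    hcomp.hasDerivWithinAt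
  have hw2 : HasDerivWithinAt (fun t : ℝ => f (x + t • v)) (-f x) (Set.Icc 0 1) 0 := by
    have hlin : HasDerivWithinAt (fun t : ℝ => (1 - t) * f x) (-f x) (Set.Icc 0 1) 0 := by
      simpa using (((hasDerivAt_id (0:ℝ)).const_sub 1).mul_const (f x)).hasDerivWithinAt
    exact hlin.congr hline (by simpa using hline 0 (Set.mem_Icc.2 ⟨le_refl 0, zero_le_one⟩))
  have hinner : ⟪g, v⟫_ℝ = -f x := by
    rw [← hw1.derivWithin hud, ← hw2.derivWithin hud]
  -- norm bound from Lipschitz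
  have hlip : LipschitzWith 1 f := lipschitz_infDist_pt S
  have hng : ‖g‖ ≤ 1 := by
    have := hF.le_of_lipschitz hlip
    rwa [(toDual ℝ (EuclideanSpace ℝ (Fin n))).norm_map g, NNReal.coe_one] at this
  have hval : ⟪-g, v⟫_ℝ = f x := by rw [inner_neg_left, hinner]; ring
  have hnorm1 : ‖g‖ = 1 := by
    refine le_antisymm hng ?_
    have hub : ⟪-g, v⟫_ℝ ≤ ‖-g‖ * ‖v‖ := real_inner_le_norm _ _
    rw [hval, hnv, norm_neg] at hub
    nlinarith [hpos]
  have hinner' : ⟪-g, v⟫_ℝ = ‖-g‖ * ‖v‖ := by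
    rw [hval, norm_neg, hnorm1, one_mul, hnv]
  have hveq : ‖v‖ • (-g) = ‖(-g)‖ • v := inner_eq_norm_mul_iff_real.1 hinner'
  have hkey : x - f x • g = y := by
    have h1 : f x • (-g) = v := by
      rw [← hnv, hveq, norm_neg, hnorm1, one_smul]
    have h2 : f x • g = -(v) := by
      rw [← neg_eq_iff_eq_neg, ← smul_neg, h1]
    rw [h2, hv]; abel
  refine ⟨?_, ?_⟩
  · rw [hkey]; exact hyS
  · rw [hkey, ← hyd]

/-- Shortest-path formula: at a point of differentiability of the signed distance function
`u` off the interface `Γ = frontier A`, the point `x - u x • ∇u x` lies on `Γ` and is a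
closest point of `Γ` to `x`. -/
theorem signedDist_shortest_path
    {n : ℕ} (A : Set (EuclideanSpace ℝ (Fin n))) (hA : IsOpen A)
    (hbdd : Bornology.IsBounded A) (hΓ : (frontier A).Nonempty)
    (u : EuclideanSpace ℝ (Fin n) → ℝ)
    (hu_in : ∀ x ∈ A, u x = -Metric.infDist x (frontier A))
    (hu_out : ∀ x ∉ A, u x = Metric.infDist x (frontier A))
    (x : EuclideanSpace ℝ (Fin n)) (hx : x ∉ frontier A)
    (hd : DifferentiableAt ℝ u x) :
    x - u x • gradient u x ∈ frontier A ∧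
      dist x (x - u x • gradient u x) = Metric.infDist x (frontier A) := by
  set Γ := frontier A with hΓdef
  set f : EuclideanSpace ℝ (Fin n) → ℝ := fun z => Metric.infDist z Γ with hf
  have hΓc : IsCompact Γ :=
    Metric.isCompact_of_isClosed_isBounded isClosed_frontier
      (hbdd.closure.subset (frontier_subset_closure))
  -- case split: x ∈ A or x ∉ closure A
  have hcases : x ∈ A ∨ x ∉ closure A := by
    by_contra h
    push_neg at h
    exact hx (by rw [hΓdef, hA.frontier_eq]; exact ⟨h.2, h.1⟩)
  rcases hcases with hxA | hxC
  · -- x ∈ A : u = -f near x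
    have heq : u =ᶠ[nhds x] fun z => -f z := by
      filter_upwards [hA.mem_nhds hxA] with z hz using hu_in z hz
    have hdf : DifferentiableAt ℝ f x := by
      have h1 : DifferentiableAt ℝ (fun z => -f z) x :=
        hd.congr_of_eventuallyEq heq.symm
      simpa using h1.neg
    have hgr : gradient u x = -gradient f x := by
      rw [heq.gradient_eq, gradient_neg_aux]
    have hux : u x = -f x := hu_in x hxA
    have hsmul : u x • gradient u x = f x • gradient f x := by
      rw [hux, hgr, smul_neg, neg_smul, neg_neg]
    rw [hsmul]
    exact closest_point_aux Γ hΓc hΓ x hx hdf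
  · -- x ∉ closure A : u = f near x
    have hopen : IsOpen (closure A)ᶜ := isClosed_closure.isOpen_compl
    have heq : u =ᶠ[nhds x] f := by
      filter_upwards [hopen.mem_nhds hxC] with z hz
      exact hu_out z (fun hzA => hz (subset_closure hzA))
    have hdf : DifferentiableAt ℝ f x := hd.congr_of_eventuallyEq heq.symm
    have hgr : gradient u x = gradient f x := heq.gradient_eq
    have hux : u x = f x := hu_out x (fun hzA => hxC (subset_closure hzA))
    rw [hux, hgr]
    exact closest_point_aux Γ hΓc hΓ x hx hdf
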